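/- Let M, N ∈ ℕ, T ∈ (0,∞), τ ∈ [0,T], a, b ∈ [0,∞), p ∈ [1,∞), let f_n : [τ,T] → [0,∞], n ∈ ℕ₀, be measurable functions, assume sup_{s∈[τ,T]} f₀(s) < ∞, and assume for all n ∈ {1,...,N} and t ∈ [τ,T] that f_n(t) ≤ a/M^{n/2} + Σ_{i=0}^{n−1} (b/M^{(n−i−1)/2}) (∫_t^T (f_i(s))^p ds)^{1/p}. Then f_N(τ) ≤ [a + b(T−τ)^{1/p} sup_{s∈[τ,T]} f₀(s)] · (1 + b(T−τ)^{1/p})^{N−1} / ( M^{(N−⌊M^{p/2}⌋)/2} · (⌊M^{p/2}⌋!)^{1/p} ) ≤ [a + b(T−τ)^{1/p} sup_{s∈[τ,T]} f₀(s)] · (1 + b(T−τ)^{1/p})^{N−1} · exp(M^{p/2}/p) / M^{N/2}. -/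

import Mathlib

open MeasureTheory ENNReal Finset

noncomputable def mlpC (a b M S : ℝ) : ℕ → ℕ → ℝ
  | 0 => fun n => if n = 0 then S else a * (M ^ ((n : ℝ) / 2))⁻¹
  | (k+1) => fun n => b * ∑ i ∈ range n, (M ^ (((n : ℝ) - (i : ℝ) - 1) / 2))⁻¹ * mlpC a b M S k i

lemma mlpC_nonneg {a b M S : ℝ} (ha : 0 ≤ a) (hb : 0 ≤ b) (hM : 0 ≤ M) (hS : 0 ≤ S) :
    ∀ k n, 0 ≤ mlpC a b M S k n := by
  intro k
  induction k with
  | zero =>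
    intro n
    simp only [mlpC]
    split
    · exact hS
    · exact mul_nonneg ha (inv_nonneg.2 (Real.rpow_nonneg hM _))
  | succ k ih =>
    intro n
    simp only [mlpC]
    exact mul_nonneg hb (Finset.sum_nonneg fun i _ =>
      mul_nonneg (inv_nonneg.2 (Real.rpow_nonneg hM _)) (ih i))

lemma mlpC_eq_zero {a b M S : ℝ} : ∀ k n, n < k → mlpC a b M S k n = 0 := by
  intro k
  induction k with
  | zero => intro n h; omega
  | succ k ih =>
    intro n h
    simp only [mlpC]
    have : ∀ i ∈ range n, (M ^ (((n : ℝ) - (i : ℝ) - 1) / 2))⁻¹ * mlpC a b M S k i = 0 := by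
      intro i hi
      rw [ih i (by simp at hi; omega), mul_zero]
    rw [Finset.sum_congr rfl this]
    simp

lemma lintegral_Lp_sum_le {α : Type*} [MeasurableSpace α] (μ : Measure α) {p : ℝ} (hp : 1 ≤ p)
    (m : ℕ) (g : ℕ → α → ℝ≥0∞) (hg : ∀ k, Measurable (g k)) :
    (∫⁻ x, (∑ k ∈ range m, g k x) ^ p ∂μ) ^ (1/p)
      ≤ ∑ k ∈ range m, (∫⁻ x, g k x ^ p ∂μ) ^ (1/p) := by
  have hp0 : 0 < p := lt_of_lt_of_le one_pos hp
  induction m with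
  | zero =>
    simp only [range_zero, Finset.sum_empty]
    rw [ENNReal.zero_rpow_of_pos hp0, lintegral_zero, ENNReal.zero_rpow_of_pos (by positivity)]
  | succ m ih =>
    calc (∫⁻ x, (∑ k ∈ range (m+1), g k x) ^ p ∂μ) ^ (1/p)
        = (∫⁻ x, ((∑ k ∈ range m, g k x) + g m x) ^ p ∂μ) ^ (1/p) := by
          simp [Finset.sum_range_succ]
      _ ≤ (∫⁻ x, (∑ k ∈ range m, g k x) ^ p ∂μ) ^ (1/p) + (∫⁻ x, g m x ^ p ∂μ) ^ (1/p) :=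
          ENNReal.lintegral_Lp_add_le (Finset.measurable_sum _ fun k _ => hg k).aemeasurable
            (hg m).aemeasurable hp
      _ ≤ ∑ k ∈ range m, (∫⁻ x, g k x ^ p ∂μ) ^ (1/p) + (∫⁻ x, g m x ^ p ∂μ) ^ (1/p) :=
          add_le_add_left ih _
      _ = ∑ k ∈ range (m+1), (∫⁻ x, g k x ^ p ∂μ) ^ (1/p) := (Finset.sum_range_succ _ _).symm

lemma lint_pow {T t : ℝ} (htT : t ≤ T) (k : ℕ) :
    ∫⁻ s in Set.Icc t T, ENNReal.ofReal ((T - s) ^ k)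
      = ENNReal.ofReal ((T - t) ^ (k+1) / (k+1)) := by
  rw [← ofReal_integral_eq_lintegral_ofReal]
  · congr 1
    rw [MeasureTheory.integral_Icc_eq_integral_Ioc,
      ← intervalIntegral.integral_of_le htT,
      intervalIntegral.integral_comp_sub_left (fun u => u ^ k) T]
    simp [integral_pow]
  · exact (Continuous.integrableOn_Icc (by continuity))
  · filter_upwards [ae_restrict_mem measurableSet_Icc] with s hs
    exact pow_nonneg (by linarith [hs.2]) k



lemma key_step {p T t : ℝ} (hp : 1 ≤ p) (htT : t ≤ T) {g : ℝ → ℝ≥0∞}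
    (m : ℕ) (c : ℕ → ℝ) (hc : ∀ k, 0 ≤ c k)
    (hbound : ∀ s ∈ Set.Icc t T, g s ≤ ∑ k ∈ range m,
      ENNReal.ofReal (c k * ((T - s) ^ k / (k.factorial : ℝ)) ^ (1/p))) :
    (∫⁻ s in Set.Icc t T, g s ^ p) ^ (1/p)
      ≤ ∑ k ∈ range m, ENNReal.ofReal (c k * ((T - t) ^ (k+1) / ((k+1).factorial : ℝ)) ^ (1/p)) := by
  have hp0 : 0 < p := lt_of_lt_of_le one_pos hp
  set u : ℕ → ℝ → ℝ≥0∞ :=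
    fun k s => ENNReal.ofReal (c k * ((T - s) ^ k / (k.factorial : ℝ)) ^ (1/p)) with hu
  have humeas : ∀ k, Measurable (u k) := by
    intro k
    have hct : Continuous fun s : ℝ => c k * ((T - s) ^ k / (k.factorial : ℝ)) ^ (1/p) := by
      apply Continuous.mul continuous_const
      apply Continuous.rpow_const (by continuity)
      intro x; right; positivity
    exact hct.measurable.ennreal_ofReal
  have h1 : (∫⁻ s in Set.Icc t T, g s ^ p)
      ≤ ∫⁻ s in Set.Icc t T, (∑ k ∈ range m, u k s) ^ p :=
    setLIntegral_mono' measurableSet_Icc (fun s hs => ENNReal.rpow_le_rpow (hbound s hs) hp0.le)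
  calc (∫⁻ s in Set.Icc t T, g s ^ p) ^ (1/p)
      ≤ (∫⁻ s in Set.Icc t T, (∑ k ∈ range m, u k s) ^ p) ^ (1/p) :=
        ENNReal.rpow_le_rpow h1 (by positivity)
    _ ≤ ∑ k ∈ range m, (∫⁻ s in Set.Icc t T, u k s ^ p) ^ (1/p) :=
        lintegral_Lp_sum_le _ hp m u humeas
    _ ≤ ∑ k ∈ range m, ENNReal.ofReal (c k * ((T - t) ^ (k+1) / ((k+1).factorial : ℝ)) ^ (1/p)) := by
        apply Finset.sum_le_sum
        intro k _
        have hfac : (0:ℝ) < (k.factorial : ℝ) := by positivity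
        have hcongr : ∫⁻ s in Set.Icc t T, u k s ^ p
            = ∫⁻ s in Set.Icc t T, ENNReal.ofReal (c k ^ p / (k.factorial : ℝ)) *
                ENNReal.ofReal ((T - s) ^ k) := by
          apply setLIntegral_congr_fun measurableSet_Icc
          intro s hs
          have hTs : (0:ℝ) ≤ T - s := by linarith [hs.2]
          have hX : (0:ℝ) ≤ (T - s)^k / (k.factorial : ℝ) := by positivity
          rw [hu]
          simp only
          rw [ENNReal.ofReal_rpow_of_nonneg (mul_nonneg (hc k) (Real.rpow_nonneg hX _)) hp0.le,
            ← ENNReal.ofReal_mul (div_nonneg (Real.rpow_nonneg (hc k) p) hfac.le)]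
          congr 1
          rw [Real.mul_rpow (hc k) (Real.rpow_nonneg hX _), ← Real.rpow_mul hX,
            one_div_mul_cancel hp0.ne', Real.rpow_one]
          ring
        rw [hcongr, lintegral_const_mul' _ _ ENNReal.ofReal_ne_top, lint_pow htT k,
          ← ENNReal.ofReal_mul (div_nonneg (Real.rpow_nonneg (hc k) p) hfac.le)]
        apply le_of_eq
        have htt : (0:ℝ) ≤ T - t := by linarith
        rw [ENNReal.ofReal_rpow_of_nonneg
          (mul_nonneg (div_nonneg (Real.rpow_nonneg (hc k) p) hfac.le) (by positivity))
          (by positivity : (0:ℝ) ≤ 1/p)]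
        congr 1
        have hrw : c k ^ p / (k.factorial : ℝ) * ((T - t) ^ (k+1) / ((k:ℝ)+1))
            = c k ^ p * ((T - t) ^ (k+1) / (((k+1).factorial : ℝ))) := by
          have hfs : (((k+1).factorial : ℕ) : ℝ) = ((k:ℝ)+1) * (k.factorial : ℝ) := by
            rw [Nat.factorial_succ]; push_cast; ring
          rw [hfs, div_mul_div_comm, mul_div_assoc, mul_comm ((k.factorial : ℝ)) ((k:ℝ)+1)]
        rw [hrw, Real.mul_rpow (Real.rpow_nonneg (hc k) p) (by positivity),
          ← Real.rpow_mul (hc k), mul_one_div_cancel hp0.ne', Real.rpow_one]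

lemma mlpSigma_eq {a b M S T τ p : ℝ} (hM : 1 ≤ M) :
    ∀ n, 1 ≤ n →
    ∑ k ∈ range (n+1), mlpC a b M S k n * ((T - τ) ^ (1/p) * (M ^ ((1:ℝ)/2))⁻¹) ^ k
      = (a + b * (T - τ) ^ (1/p) * S) * (1 + b * (T - τ) ^ (1/p)) ^ (n - 1)
          * (M ^ ((n:ℝ)/2))⁻¹ := by
  have hM0 : (0:ℝ) < M := lt_of_lt_of_le one_pos hM
  have hMinv : ∀ x y : ℝ, (M ^ x)⁻¹ * (M ^ y)⁻¹ = (M ^ (x+y))⁻¹ := fun x y => by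
    rw [← mul_inv, ← Real.rpow_add hM0]
  set θ : ℝ := (T - τ) ^ (1/p) * (M ^ ((1:ℝ)/2))⁻¹ with hθ
  set βr : ℝ := b * (T - τ) ^ (1/p) with hβr
  set c0 : ℝ := a + βr * S with hc0
  intro n
  induction n using Nat.strong_induction_on with
  | _ n ih =>
    intro hn
    obtain ⟨m, rfl⟩ : ∃ m, n = m + 1 := ⟨n - 1, by omega⟩
    rw [Finset.sum_range_succ']
    have h0 : mlpC a b M S 0 (m+1) * θ ^ 0 = a * (M ^ (((m+1:ℕ) : ℝ) / 2))⁻¹ := by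
      simp [mlpC]
    rw [h0]
    have hA : ∑ k ∈ range (m+1), mlpC a b M S (k+1) (m+1) * θ ^ (k+1)
        = ∑ i ∈ range (m+1), (b*θ) * ((M ^ ((((m+1:ℕ):ℝ) - (i:ℝ) - 1)/2))⁻¹
            * ∑ k ∈ range (m+1), mlpC a b M S k i * θ ^ k) := by
      calc ∑ k ∈ range (m+1), mlpC a b M S (k+1) (m+1) * θ ^ (k+1)
          = ∑ k ∈ range (m+1), ∑ i ∈ range (m+1),
              (b*θ) * ((M ^ ((((m+1:ℕ):ℝ) - (i:ℝ) - 1)/2))⁻¹ * (mlpC a b M S k i * θ ^ k)) := by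
            apply Finset.sum_congr rfl
            intro k _
            show (b * ∑ i ∈ range (m+1), _) * θ ^ (k+1) = _
            rw [Finset.mul_sum, Finset.sum_mul]
            apply Finset.sum_congr rfl
            intro i _
            push_cast
            ring
        _ = ∑ i ∈ range (m+1), ∑ k ∈ range (m+1),
              (b*θ) * ((M ^ ((((m+1:ℕ):ℝ) - (i:ℝ) - 1)/2))⁻¹ * (mlpC a b M S k i * θ ^ k)) :=
            Finset.sum_comm
        _ = _ := by
            apply Finset.sum_congr rfl
            intro i _
            rw [← Finset.mul_sum, ← Finset.mul_sum]
    rw [hA]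
    have hσ : ∀ i, i < m+1 → ∑ k ∈ range (m+1), mlpC a b M S k i * θ ^ k
        = ∑ k ∈ range (i+1), mlpC a b M S k i * θ ^ k := by
      intro i hi
      refine (Finset.sum_subset (by simp; omega) ?_).symm
      intro k _ hk
      rw [mlpC_eq_zero k i (by simp at hk; omega), zero_mul]
    rw [Finset.sum_range_succ']
    have hF0 : (b*θ) * ((M ^ ((((m+1:ℕ):ℝ) - ((0:ℕ):ℝ) - 1)/2))⁻¹
          * ∑ k ∈ range (m+1), mlpC a b M S k 0 * θ ^ k)
        = βr * S * (M ^ (((m+1:ℕ):ℝ)/2))⁻¹ := by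
      rw [hσ 0 (by omega)]
      have : ∑ k ∈ range 1, mlpC a b M S k 0 * θ ^ k = S := by simp [mlpC]
      rw [this, hθ, hβr]
      calc b * ((T - τ) ^ (1/p) * (M ^ ((1:ℝ)/2))⁻¹)
            * ((M ^ ((((m+1:ℕ):ℝ) - ((0:ℕ):ℝ) - 1)/2))⁻¹ * S)
          = b * (T - τ) ^ (1/p) * S
              * ((M ^ ((1:ℝ)/2))⁻¹ * (M ^ ((((m+1:ℕ):ℝ) - ((0:ℕ):ℝ) - 1)/2))⁻¹) := by ring
        _ = b * (T - τ) ^ (1/p) * S * (M ^ (((m+1:ℕ):ℝ)/2))⁻¹ := by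
            rw [hMinv]
            congr 2
            push_cast
            ring
    rw [hF0]
    have hFi : ∀ i, i < m → (b*θ) * ((M ^ ((((m+1:ℕ):ℝ) - ((i+1:ℕ):ℝ) - 1)/2))⁻¹
          * ∑ k ∈ range (m+1), mlpC a b M S k (i+1) * θ ^ k)
        = (1 + βr) ^ i * (βr * c0 * (M ^ (((m+1:ℕ):ℝ)/2))⁻¹) := by
      intro i hi
      rw [hσ (i+1) (by omega), ih (i+1) (by omega) (by omega)]
      simp only [Nat.add_sub_cancel]
      rw [hθ, hβr]
      calc b * ((T - τ) ^ (1/p) * (M ^ ((1:ℝ)/2))⁻¹)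
            * ((M ^ ((((m+1:ℕ):ℝ) - ((i+1:ℕ):ℝ) - 1)/2))⁻¹
              * (c0 * (1 + b * (T - τ) ^ (1/p)) ^ i * (M ^ (((i+1:ℕ):ℝ)/2))⁻¹))
          = (1 + b * (T - τ) ^ (1/p)) ^ i * (b * (T - τ) ^ (1/p) * c0
              * ((M ^ ((1:ℝ)/2))⁻¹ * ((M ^ ((((m+1:ℕ):ℝ) - ((i+1:ℕ):ℝ) - 1)/2))⁻¹
                  * (M ^ (((i+1:ℕ):ℝ)/2))⁻¹))) := by ring
        _ = _ := by
            rw [hMinv, hMinv]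
            congr 3
            push_cast
            ring
    rw [Finset.sum_congr rfl (fun i hi => hFi i (by simpa using hi))]
    rw [← Finset.sum_mul]
    have hgeom : (∑ i ∈ range m, (1 + βr) ^ i) * βr = (1 + βr) ^ m - 1 := by
      have := geom_sum_mul (1 + βr) m
      simpa using this
    simp only [Nat.add_sub_cancel, hc0]
    linear_combination ((M ^ (((m+1:ℕ):ℝ)/2))⁻¹ * (a + βr * S)) * hgeom
lemma pow_div_factorial_le_max (x : ℝ) (hx : 1 ≤ x) (k : ℕ) :
    x ^ k / (k.factorial : ℝ) ≤ x ^ (⌊x⌋₊) / ((⌊x⌋₊).factorial : ℝ) := by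
  set K := ⌊x⌋₊ with hK
  have hx0 : (0:ℝ) ≤ x := by linarith
  have hup : ∀ j : ℕ, (j:ℝ) + 1 ≤ x →
      x ^ j / (j.factorial:ℝ) ≤ x ^ (j+1) / ((j+1).factorial:ℝ) := by
    intro j hj
    rw [div_le_div_iff₀ (by positivity) (by positivity)]
    have hfs : (((j+1).factorial : ℕ):ℝ) = ((j:ℝ)+1) * (j.factorial:ℝ) := by
      rw [Nat.factorial_succ]; push_cast; ring
    rw [hfs, pow_succ]
    have h1 : (0:ℝ) ≤ x ^ j := by positivity
    have h2 : (0:ℝ) < (j.factorial:ℝ) := by positivity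
    nlinarith [mul_nonneg h1 h2.le, mul_le_mul_of_nonneg_left hj (mul_nonneg h1 h2.le)]
  have hdown : ∀ j : ℕ, x ≤ (j:ℝ) + 1 →
      x ^ (j+1) / ((j+1).factorial:ℝ) ≤ x ^ j / (j.factorial:ℝ) := by
    intro j hj
    rw [div_le_div_iff₀ (by positivity) (by positivity)]
    have hfs : (((j+1).factorial : ℕ):ℝ) = ((j:ℝ)+1) * (j.factorial:ℝ) := by
      rw [Nat.factorial_succ]; push_cast; ring
    rw [hfs, pow_succ]
    have h1 : (0:ℝ) ≤ x ^ j := by positivity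
    have h2 : (0:ℝ) < (j.factorial:ℝ) := by positivity
    nlinarith [mul_nonneg h1 h2.le, mul_le_mul_of_nonneg_left hj (mul_nonneg h1 h2.le)]
  rcases le_or_gt k K with h | h
  · have main : ∀ n, k ≤ n → n ≤ K → x ^ k / (k.factorial:ℝ) ≤ x ^ n / (n.factorial:ℝ) := by
      intro n hkn
      induction n, hkn using Nat.le_induction with
      | base => intro _; exact le_refl _
      | succ n hn ihn =>
        intro hnK
        have hcast : ((n:ℝ)+1) ≤ x := by
          have h1 : ((n+1:ℕ):ℝ) ≤ (K:ℝ) := by exact_mod_cast hnK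
          have h2 : (K:ℝ) ≤ x := Nat.floor_le hx0
          push_cast at h1
          linarith
        exact le_trans (ihn (by omega)) (hup n hcast)
    exact main K h le_rfl
  · have main : ∀ n, K ≤ n → x ^ n / (n.factorial:ℝ) ≤ x ^ K / (K.factorial:ℝ) := by
      intro n hKn
      induction n, hKn using Nat.le_induction with
      | base => exact le_refl _
      | succ n hn ihn =>
        have hxn : x ≤ (n:ℝ) + 1 := by
          have h1 : x < (K:ℝ) + 1 := Nat.lt_floor_add_one x
          have h2 : (K:ℝ) ≤ (n:ℝ) := by exact_mod_cast hn
          linarith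
        exact le_trans (hdown n hxn) ihn
    exact main k h.le

lemma pow_div_factorial_le_exp (x : ℝ) (hx : 0 ≤ x) (K : ℕ) :
    x ^ K / (K.factorial : ℝ) ≤ Real.exp x :=
  le_trans (Finset.single_le_sum (f := fun i => x ^ i / (i.factorial : ℝ))
    (fun i _ => by positivity) (self_mem_range_succ K))
    (Real.sum_le_exp_of_nonneg hx (K+1))
/-- Gronwall-type estimate for full-history recursive inequalities (MLP error recursion). -/
theorem mlp_full_history_gronwall (M N : ℕ) (hM : 1 ≤ M) (hN : 1 ≤ N)
    (T τ : ℝ) (hT : 0 < T) (hτ : τ ∈ Set.Icc (0:ℝ) T)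
    (a b : ℝ) (ha : 0 ≤ a) (hb : 0 ≤ b) (p : ℝ) (hp : 1 ≤ p)
    (f : ℕ → ℝ → ℝ≥0∞) (hf : ∀ n, Measurable (f n))
    (hsup : (⨆ s ∈ Set.Icc τ T, f 0 s) < ⊤)
    (hrec : ∀ n, 1 ≤ n → n ≤ N → ∀ t ∈ Set.Icc τ T,
      f n t ≤ ENNReal.ofReal (a / (M : ℝ) ^ ((n : ℝ) / 2))
        + ∑ i ∈ range n, ENNReal.ofReal (b / (M : ℝ) ^ (((n : ℝ) - i - 1) / 2))
            * (∫⁻ s in Set.Icc t T, (f i s) ^ p) ^ (1 / p)) :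
    f N τ ≤ (ENNReal.ofReal a
        + ENNReal.ofReal (b * (T - τ) ^ (1 / p)) * ⨆ s ∈ Set.Icc τ T, f 0 s)
        * ENNReal.ofReal ((1 + b * (T - τ) ^ (1 / p)) ^ (N - 1)
          / ((M : ℝ) ^ (((N : ℝ) - (⌊(M : ℝ) ^ (p / 2)⌋₊ : ℝ)) / 2)
            * ((⌊(M : ℝ) ^ (p / 2)⌋₊).factorial : ℝ) ^ (1 / p))) ∧
    (ENNReal.ofReal a
        + ENNReal.ofReal (b * (T - τ) ^ (1 / p)) * ⨆ s ∈ Set.Icc τ T, f 0 s)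
        * ENNReal.ofReal ((1 + b * (T - τ) ^ (1 / p)) ^ (N - 1)
          / ((M : ℝ) ^ (((N : ℝ) - (⌊(M : ℝ) ^ (p / 2)⌋₊ : ℝ)) / 2)
            * ((⌊(M : ℝ) ^ (p / 2)⌋₊).factorial : ℝ) ^ (1 / p)))
      ≤ (ENNReal.ofReal a
        + ENNReal.ofReal (b * (T - τ) ^ (1 / p)) * ⨆ s ∈ Set.Icc τ T, f 0 s)
        * ENNReal.ofReal ((1 + b * (T - τ) ^ (1 / p)) ^ (N - 1)
          * Real.exp ((M : ℝ) ^ (p / 2) / p) / (M : ℝ) ^ ((N : ℝ) / 2)) := by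
  have hp0 : (0:ℝ) < p := lt_of_lt_of_le one_pos hp
  have hM1 : (1:ℝ) ≤ (M:ℝ) := by exact_mod_cast hM
  have hM0 : (0:ℝ) < (M:ℝ) := lt_of_lt_of_le one_pos hM1
  have hτT : τ ≤ T := hτ.2
  have hTτ : (0:ℝ) ≤ T - τ := by linarith
  set x : ℝ := (M:ℝ) ^ (p/2) with hx
  have hx1 : (1:ℝ) ≤ x := Real.one_le_rpow hM1 (by positivity)
  set K : ℕ := ⌊x⌋₊ with hKdef
  set S' : ℝ := (⨆ s ∈ Set.Icc τ T, f 0 s).toReal with hS'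
  have hS'0 : (0:ℝ) ≤ S' := ENNReal.toReal_nonneg
  have hsup' : (⨆ s ∈ Set.Icc τ T, f 0 s) = ENNReal.ofReal S' :=
    (ENNReal.ofReal_toReal hsup.ne).symm
  have hf0 : ∀ s ∈ Set.Icc τ T, f 0 s ≤ ENNReal.ofReal S' := by
    intro s hs
    rw [← hsup']
    exact le_biSup _ hs
  set βr : ℝ := b * (T - τ) ^ (1/p) with hβr
  have hβr0 : 0 ≤ βr := by
    rw [hβr]; positivity
  set c0 : ℝ := a + βr * S' with hc0
  have hc00 : 0 ≤ c0 := by rw [hc0]; positivity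
  set C : ℕ → ℕ → ℝ := mlpC a b (M:ℝ) S' with hCdef
  have hCnn : ∀ k n, 0 ≤ C k n := mlpC_nonneg ha hb hM0.le hS'0
  -- main induction
  have P : ∀ n, n ≤ N → ∀ t ∈ Set.Icc τ T,
      f n t ≤ ∑ k ∈ range (n+1),
        ENNReal.ofReal (C k n * ((T - t) ^ k / (k.factorial : ℝ)) ^ (1/p)) := by
    intro n
    induction n using Nat.strong_induction_on with
    | _ n ih =>
      intro hnN t ht
      have htT : t ≤ T := ht.2
      rcases Nat.eq_zero_or_pos n with rfl | hn1
      · have he : C 0 0 * ((T - t) ^ 0 / ((Nat.factorial 0 : ℕ) : ℝ)) ^ (1/p) = S' := by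
          simp [hCdef, mlpC]
        simpa [he, hCdef, mlpC] using hf0 t ht
      · refine le_trans (hrec n hn1 hnN t ht) ?_
        rw [Finset.sum_range_succ']
        have hlast : ENNReal.ofReal (C 0 n * ((T - t) ^ 0 / ((Nat.factorial 0 : ℕ) : ℝ)) ^ (1/p))
            = ENNReal.ofReal (a / (M : ℝ) ^ ((n : ℝ) / 2)) := by
          have hne : n ≠ 0 := by omega
          simp [hCdef, mlpC, hne, div_eq_mul_inv]
        rw [hlast, add_comm (∑ k ∈ range n, _) _]
        refine add_le_add_right ?_ _
        -- middle sums
        calc ∑ i ∈ range n, ENNReal.ofReal (b / (M : ℝ) ^ (((n : ℝ) - i - 1) / 2))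
              * (∫⁻ s in Set.Icc t T, (f i s) ^ p) ^ (1 / p)
            ≤ ∑ i ∈ range n, ∑ k ∈ range n,
                ENNReal.ofReal ((b / (M : ℝ) ^ (((n : ℝ) - i - 1) / 2))
                  * (C k i * ((T - t) ^ (k+1) / (((k+1).factorial : ℕ) : ℝ)) ^ (1/p))) := by
              apply Finset.sum_le_sum
              intro i hi
              have hiN : i ≤ N := by simp at hi; omega
              have hkey : (∫⁻ s in Set.Icc t T, (f i s) ^ p) ^ (1 / p)
                  ≤ ∑ k ∈ range (i+1), ENNReal.ofReal
                      (C k i * ((T - t) ^ (k+1) / (((k+1).factorial : ℕ) : ℝ)) ^ (1/p)) := by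
                apply key_step hp htT (i+1) (fun k => C k i) (fun k => hCnn k i)
                intro s hs
                exact ih i (by simp at hi; omega) hiN s ⟨le_trans ht.1 hs.1, hs.2⟩
              calc ENNReal.ofReal (b / (M : ℝ) ^ (((n : ℝ) - i - 1) / 2))
                    * (∫⁻ s in Set.Icc t T, (f i s) ^ p) ^ (1 / p)
                  ≤ ENNReal.ofReal (b / (M : ℝ) ^ (((n : ℝ) - i - 1) / 2))
                    * ∑ k ∈ range (i+1), ENNReal.ofReal
                      (C k i * ((T - t) ^ (k+1) / (((k+1).factorial : ℕ) : ℝ)) ^ (1/p)) :=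
                    mul_le_mul_right hkey _
                _ = ∑ k ∈ range (i+1), ENNReal.ofReal ((b / (M : ℝ) ^ (((n : ℝ) - i - 1) / 2))
                      * (C k i * ((T - t) ^ (k+1) / (((k+1).factorial : ℕ) : ℝ)) ^ (1/p))) := by
                    rw [Finset.mul_sum]
                    apply Finset.sum_congr rfl
                    intro k _
                    rw [← ENNReal.ofReal_mul (by positivity)]
                _ ≤ _ := by
                    apply Finset.sum_le_sum_of_subset
                    apply Finset.range_subset_range.2
                    simp at hi; omega
          _ = ∑ k ∈ range n, ENNReal.ofReal
                (C (k+1) n * ((T - t) ^ (k+1) / (((k+1).factorial : ℕ) : ℝ)) ^ (1/p)) := by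
              rw [Finset.sum_comm]
              apply Finset.sum_congr rfl
              intro k _
              rw [← ENNReal.ofReal_sum_of_nonneg (fun i _ => mul_nonneg (by positivity)
                (mul_nonneg (hCnn k i) (Real.rpow_nonneg
                  (div_nonneg (pow_nonneg (by linarith : (0:ℝ) ≤ T - t) _) (by positivity)) _)))]
              congr 1
              have hexp : C (k+1) n = b * ∑ i ∈ range n,
                  ((M:ℝ) ^ (((n : ℝ) - (i : ℝ) - 1) / 2))⁻¹ * C k i := by
                rw [hCdef]
                rfl
              rw [hexp, Finset.mul_sum, Finset.sum_mul]
              apply Finset.sum_congr rfl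
              intro i _
              rw [div_eq_mul_inv]
              ring
  -- real-number helpers
  set θ : ℝ := (T - τ) ^ (1/p) * (((M:ℝ)) ^ ((1:ℝ)/2))⁻¹ with hθ
  have hθ0 : 0 ≤ θ := by
    rw [hθ]; positivity
  have hconv : ∀ k : ℕ, (x ^ k / (k.factorial:ℝ)) ^ (1/p)
      = (M:ℝ) ^ ((k:ℝ)/2) / ((k.factorial:ℝ)) ^ (1/p) := by
    intro k
    rw [Real.div_rpow (by positivity) (by positivity)]
    congr 1
    rw [hx, ← Real.rpow_natCast (((M:ℝ)) ^ (p/2)) k, ← Real.rpow_mul hM0.le,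
      ← Real.rpow_mul hM0.le]
    congr 1
    field_simp
  have hmax : ∀ k : ℕ, (M:ℝ) ^ ((k:ℝ)/2) / ((k.factorial:ℝ)) ^ (1/p)
      ≤ (M:ℝ) ^ ((K:ℝ)/2) / ((K.factorial:ℝ)) ^ (1/p) := by
    intro k
    rw [← hconv k, ← hconv K]
    refine Real.rpow_le_rpow (by positivity) ?_ (by positivity)
    rw [hKdef]
    exact pow_div_factorial_le_max x hx1 k
  have hH : ∀ k : ℕ, ((T - τ) ^ k / (k.factorial:ℝ)) ^ (1/p)
      = θ ^ k * ((M:ℝ) ^ ((k:ℝ)/2) / ((k.factorial:ℝ)) ^ (1/p)) := by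
    intro k
    have hMk : (0:ℝ) < (M:ℝ) ^ ((k:ℝ)/2) := Real.rpow_pos_of_pos hM0 _
    have e1 : ((T - τ) ^ (1/p)) ^ k = ((T - τ) ^ k) ^ (1/p) := by
      rw [← Real.rpow_natCast ((T - τ) ^ (1/p)) k, ← Real.rpow_mul hTτ,
        ← Real.rpow_natCast (T - τ) k, ← Real.rpow_mul hTτ, mul_comm]
    have e2 : (((M:ℝ) ^ ((1:ℝ)/2)) ^ k) = (M:ℝ) ^ ((k:ℝ)/2) := by
      rw [← Real.rpow_natCast (((M:ℝ)) ^ ((1:ℝ)/2)) k, ← Real.rpow_mul hM0.le]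
      congr 1
      ring
    rw [hθ, mul_pow, inv_pow, e1, e2, Real.div_rpow (pow_nonneg hTτ _) (by positivity)]
    field_simp
  have hMsplit : (M:ℝ) ^ (((N:ℝ) - (K:ℝ))/2) * (M:ℝ) ^ ((K:ℝ)/2) = (M:ℝ) ^ ((N:ℝ)/2) := by
    rw [← Real.rpow_add hM0]
    congr 1
    ring
  have hreal : ∑ k ∈ range (N+1), C k N * ((T - τ) ^ k / (k.factorial:ℝ)) ^ (1/p)
      ≤ c0 * ((1 + βr) ^ (N - 1)
          / ((M:ℝ) ^ (((N:ℝ) - (K:ℝ))/2) * ((K.factorial:ℝ)) ^ (1/p))) := by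
    have h2 : (((M:ℝ) ^ ((N:ℝ)/2))⁻¹ * ((M:ℝ) ^ ((K:ℝ)/2)))
        = ((M:ℝ) ^ (((N:ℝ) - (K:ℝ))/2))⁻¹ := by
      rw [← hMsplit, mul_inv, mul_assoc,
        inv_mul_cancel₀ (ne_of_gt (Real.rpow_pos_of_pos hM0 _)), mul_one]
    calc ∑ k ∈ range (N+1), C k N * ((T - τ) ^ k / (k.factorial:ℝ)) ^ (1/p)
        = ∑ k ∈ range (N+1), (C k N * θ ^ k)
            * ((M:ℝ) ^ ((k:ℝ)/2) / ((k.factorial:ℝ)) ^ (1/p)) := by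
          apply Finset.sum_congr rfl
          intro k _
          rw [hH k]
          ring
      _ ≤ ∑ k ∈ range (N+1), (C k N * θ ^ k)
            * ((M:ℝ) ^ ((K:ℝ)/2) / ((K.factorial:ℝ)) ^ (1/p)) := by
          apply Finset.sum_le_sum
          intro k _
          exact mul_le_mul_of_nonneg_left (hmax k) (mul_nonneg (hCnn k N) (pow_nonneg hθ0 k))
      _ = (∑ k ∈ range (N+1), C k N * θ ^ k)
            * ((M:ℝ) ^ ((K:ℝ)/2) / ((K.factorial:ℝ)) ^ (1/p)) := by
          rw [← Finset.sum_mul]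
      _ = (c0 * (1 + βr) ^ (N - 1) * (((M:ℝ)) ^ ((N:ℝ)/2))⁻¹)
            * ((M:ℝ) ^ ((K:ℝ)/2) / ((K.factorial:ℝ)) ^ (1/p)) := by
          rw [hCdef, hθ, mlpSigma_eq hM1 N hN, hβr, hc0]
      _ = c0 * ((1 + βr) ^ (N - 1)
            / ((M:ℝ) ^ (((N:ℝ) - (K:ℝ))/2) * ((K.factorial:ℝ)) ^ (1/p))) := by
          have hMNne : ((M:ℝ) ^ ((N:ℝ)/2)) ≠ 0 := ne_of_gt (Real.rpow_pos_of_pos hM0 _)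
          have hMKne : ((M:ℝ) ^ ((K:ℝ)/2)) ≠ 0 := ne_of_gt (Real.rpow_pos_of_pos hM0 _)
          have hMNKne : ((M:ℝ) ^ (((N:ℝ) - (K:ℝ))/2)) ≠ 0 :=
            ne_of_gt (Real.rpow_pos_of_pos hM0 _)
          have hFne : ((K.factorial:ℝ)) ^ (1/p) ≠ 0 :=
            ne_of_gt (Real.rpow_pos_of_pos (by positivity) _)
          rw [← hMsplit]
          field_simp
  have hsum_le : f N τ ≤ ENNReal.ofReal
      (∑ k ∈ range (N+1), C k N * ((T - τ) ^ k / (k.factorial:ℝ)) ^ (1/p)) := by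
    refine le_trans (P N le_rfl τ ⟨le_refl τ, hτT⟩) (le_of_eq ?_)
    rw [ENNReal.ofReal_sum_of_nonneg]
    intro k _
    exact mul_nonneg (hCnn k N) (Real.rpow_nonneg (div_nonneg (pow_nonneg hTτ _)
      (by positivity)) _)
  have hrhs : ENNReal.ofReal a + ENNReal.ofReal βr * (⨆ s ∈ Set.Icc τ T, f 0 s)
      = ENNReal.ofReal c0 := by
    rw [hsup', ← ENNReal.ofReal_mul hβr0, ← ENNReal.ofReal_add ha (mul_nonneg hβr0 hS'0), hc0]
  constructor
  · rw [hrhs, ← ENNReal.ofReal_mul hc00]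
    exact le_trans hsum_le (ENNReal.ofReal_le_ofReal hreal)
  · apply mul_le_mul_right
    apply ENNReal.ofReal_le_ofReal
    have h1β : (0:ℝ) < 1 + βr := by linarith
    have hFpos : (0:ℝ) < ((K.factorial:ℝ)) ^ (1/p) := Real.rpow_pos_of_pos (by positivity) _
    have hMN : (0:ℝ) < (M:ℝ) ^ ((N:ℝ)/2) := Real.rpow_pos_of_pos hM0 _
    have hMNK : (0:ℝ) < (M:ℝ) ^ (((N:ℝ) - (K:ℝ))/2) := Real.rpow_pos_of_pos hM0 _
    have hxK : x ^ K / (K.factorial:ℝ) ≤ Real.exp x :=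
      pow_div_factorial_le_exp x (by linarith) K
    have hMK : (M:ℝ) ^ ((K:ℝ)/2) ≤ Real.exp (x/p) * ((K.factorial:ℝ)) ^ (1/p) := by
      have h1 : (x ^ K / (K.factorial:ℝ)) ^ (1/p) ≤ (Real.exp x) ^ (1/p) :=
        Real.rpow_le_rpow (by positivity) hxK (by positivity)
      rw [hconv K, ← Real.exp_mul, mul_one_div] at h1
      exact (div_le_iff₀ hFpos).1 h1
    rw [div_le_div_iff₀ (by positivity) hMN]
    calc (1 + βr) ^ (N - 1) * (M:ℝ) ^ ((N:ℝ)/2)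
        = (1 + βr) ^ (N - 1) * ((M:ℝ) ^ (((N:ℝ) - (K:ℝ))/2) * (M:ℝ) ^ ((K:ℝ)/2)) := by
          rw [hMsplit]
      _ ≤ (1 + βr) ^ (N - 1) * ((M:ℝ) ^ (((N:ℝ) - (K:ℝ))/2)
            * (Real.exp (x/p) * ((K.factorial:ℝ)) ^ (1/p))) := by
          refine mul_le_mul_of_nonneg_left ?_ (by positivity)
          exact mul_le_mul_of_nonneg_left hMK hMNK.le
      _ = (1 + βr) ^ (N - 1) * Real.exp (x/p)
            * ((M:ℝ) ^ (((N:ℝ) - (K:ℝ))/2) * ((K.factorial:ℝ)) ^ (1/p)) := by ring
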